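/- Let M be a solvable, weakly regime-acyclic, causally sufficient SCM with regime indicator R, let r be a value of R, and let Z be a set of observables with R ∉ Z. Writing A_r for the union of the union-graph ancestors of R and the descriptive-graph (for regime r) ancestors of Z, we have P({η_i} | Z, R = r) = P({η_i : i ∈ A_r} | Z, R = r) × ∏_{j ∉ A_r} P(η_j); in particular for k ∉ A_r, P(η_k | Z, R = r) = P(η_k). -/
import Mathlib


open scoped Classical

noncomputable def pr {Ω : Type*} [Fintype Ω] (P : Ω → ℝ) (A : Set Ω) : ℝ :=
  ∑ ω, if ω ∈ A then P ω else 0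

noncomputable def cpr {Ω : Type*} [Fintype Ω] (P : Ω → ℝ) (A B : Set Ω) : ℝ :=
  pr P (A ∩ B) / pr P B

private lemma sum_pi_prod {κ : Type*} [Fintype κ] [DecidableEq κ] (N : κ → Type*)
    [∀ j, Fintype (N j)] (g : ∀ j, N j → ℝ) :
    (∑ b : ∀ j, N j, ∏ j, g j (b j)) = ∏ j, ∑ n, g j n := by
  rw [Finset.prod_univ_sum, Fintype.piFinset_univ]

private lemma sum_pi_one {κ : Type*} [Fintype κ] [DecidableEq κ] (N : κ → Type*)
    [∀ j, Fintype (N j)] (w : ∀ j, N j → ℝ) (hw : ∀ j, ∑ n, w j n = 1) :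
    (∑ b : ∀ j, N j, ∏ j, w j (b j)) = 1 := by
  rw [sum_pi_prod]
  simp [hw]

private lemma sum_pi_point {κ : Type*} [Fintype κ] [DecidableEq κ] (N : κ → Type*)
    [∀ j, Fintype (N j)] (w : ∀ j, N j → ℝ) (hw : ∀ j, ∑ n, w j n = 1)
    (k : κ) (nk : N k) :
    (∑ b : ∀ j, N j, if b k = nk then ∏ j, w j (b j) else 0) = w k nk := by
  classical
  set g : ∀ j, N j → ℝ := fun j n => if h : j = k then (if h ▸ n = nk then w j n else 0)
      else w j n with hg
  have hterm : ∀ b : ∀ j, N j,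
      (if b k = nk then ∏ j, w j (b j) else 0) = ∏ j, g j (b j) := by
    intro b
    by_cases hb : b k = nk
    · rw [if_pos hb]
      apply Finset.prod_congr rfl
      intro j _
      rcases eq_or_ne j k with rfl | hj
      · simp [hg, hb]
      · simp [hg, hj]
    · rw [if_neg hb]
      refine (Finset.prod_eq_zero (Finset.mem_univ k) ?_).symm
      simp [hg, hb]
  calc (∑ b : ∀ j, N j, if b k = nk then ∏ j, w j (b j) else 0)
      = ∑ b : ∀ j, N j, ∏ j, g j (b j) := Finset.sum_congr rfl fun b _ => hterm b
    _ = ∏ j, ∑ n, g j n := sum_pi_prod N g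
    _ = w k nk := by
        rw [Finset.prod_eq_single_of_mem k (Finset.mem_univ k)]
        · simp [hg, Finset.sum_ite_eq']
        · intro j _ hj
          simp [hg, hj, hw j]

/-- regime-specific noise factorization. With `A_r` the union of the
union-graph ancestors of `R` and the descriptive-graph (regime `r`) ancestors of `Zs`,
conditioning on `{Z = z, R = r}` (with `R ∉ Zs`) leaves the noises outside `A_r`
independent and unchanged: `P({η_i} | Z, R = r) = P({η_i : i ∈ A_r} | Z, R = r) ×
∏_{j ∉ A_r} P(η_j)`; in particular `P(η_k | Z, R = r) = P(η_k)` for `k ∉ A_r`. -/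
theorem stmt_8 {ι : Type*} [Fintype ι] [DecidableEq ι]
    (Val : ι → Type*) (Noise : ι → Type*) [∀ j, Fintype (Noise j)]
    (p : ∀ j, Noise j → ℝ)
    (hpos : ∀ (j : ι) (n : Noise j), 0 ≤ p j n) (hsump : ∀ j : ι, ∑ n, p j n = 1)
    (P : (∀ j, Noise j) → ℝ)
    (hP : ∀ η : ∀ j, Noise j, P η = ∏ j, p j (η j))  -- causal sufficiency
    (EU ED : ι → ι → Prop)  -- union graph and descriptive graph for regime r
    (R : ι) (r : Val R)
    (F : ∀ i : ι, (∀ j, Noise j) → Val i)  -- solution functions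
    (Zs : Set ι) (hRZ : R ∉ Zs) (z : ∀ i, Val i)
    (Ar : Set ι)
    (hAr : Ar = {j : ι | Relation.ReflTransGen EU j R} ∪
                {j : ι | ∃ i ∈ Zs, Relation.ReflTransGen ED j i})
    (hdepR : ∀ η η' : ∀ j, Noise j,
      (∀ j, Relation.ReflTransGen EU j R → η j = η' j) → F R η = F R η')
    (hdepZ : ∀ i ∈ Zs, ∀ η η' : ∀ j, Noise j, F R η = r → F R η' = r →
      (∀ j ∈ Ar, η j = η' j) → F i η = F i η')
    (hposZ : pr P {η | F R η = r ∧ ∀ i ∈ Zs, F i η = z i} ≠ 0) :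
    (∀ η₀ : ∀ j, Noise j,
      cpr P {η | η = η₀} {η | F R η = r ∧ ∀ i ∈ Zs, F i η = z i}
        = cpr P {η | ∀ j ∈ Ar, η j = η₀ j} {η | F R η = r ∧ ∀ i ∈ Zs, F i η = z i}
          * ∏ j, if j ∈ Ar then (1 : ℝ) else p j (η₀ j)) ∧
    (∀ k : ι, k ∉ Ar → ∀ nk : Noise k,
      cpr P {η | η k = nk} {η | F R η = r ∧ ∀ i ∈ Zs, F i η = z i} = p k nk) := by
  classical
  set B : Set (∀ j, Noise j) := {η | F R η = r ∧ ∀ i ∈ Zs, F i η = z i} with hB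
  -- membership in B only depends on coordinates in Ar
  have hFReq : ∀ η η' : ∀ j, Noise j, (∀ j ∈ Ar, η j = η' j) → F R η = F R η' := by
    intro η η' h
    exact hdepR η η' fun j hj => h j (by rw [hAr]; exact Or.inl hj)
  have hmemB : ∀ η η' : ∀ j, Noise j, (∀ j ∈ Ar, η j = η' j) → η ∈ B → η' ∈ B := by
    rintro η η' h ⟨h1, h2⟩
    have e1 : F R η' = r := by rw [← hFReq η η' h]; exact h1
    refine ⟨e1, fun i hi => ?_⟩
    rw [← hdepZ i hi η η' h1 e1 h]
    exact h2 i hi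
  have hQiff : ∀ η η' : ∀ j, Noise j, (∀ j ∈ Ar, η j = η' j) → (η ∈ B ↔ η' ∈ B) :=
    fun η η' h => ⟨hmemB η η' h, hmemB η' η fun j hj => (h j hj).symm⟩
  set e := Equiv.piEquivPiSubtypeProd (· ∈ Ar) Noise with he
  have hmerge : ∀ (a : ∀ j : {j // j ∈ Ar}, Noise j) (b : ∀ j : {j // ¬ j ∈ Ar}, Noise j)
      (j : ι), e.symm (a, b) j = if h : j ∈ Ar then a ⟨j, h⟩ else b ⟨j, h⟩ := by
    intro a b j
    rw [he, Equiv.piEquivPiSubtypeProd_symm_apply]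
  have hsplit : ∀ g : (∀ j, Noise j) → ℝ,
      (∑ η, g η) = ∑ a, ∑ b, g (e.symm (a, b)) := by
    intro g
    rw [← Equiv.sum_comp e.symm g, Fintype.sum_prod_type]
  have hPfac : ∀ a b, P (e.symm (a, b)) =
      (∏ j : {j // j ∈ Ar}, p j (a j)) * (∏ j : {j // ¬ j ∈ Ar}, p j (b j)) := by
    intro a b
    rw [hP, ← Fintype.prod_subtype_mul_prod_subtype (· ∈ Ar)
      (fun j => p j (e.symm (a, b) j))]
    congr 1
    · exact Finset.prod_congr rfl fun j _ => by rw [hmerge, dif_pos j.2]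
    · exact Finset.prod_congr rfl fun j _ => by rw [hmerge, dif_neg j.2]
  -- nonemptyness, to pick default non-Ar coordinates
  have hne : Nonempty (∀ j, Noise j) := by
    by_contra h
    apply hposZ
    unfold pr
    exact Finset.sum_eq_zero fun ω _ => (h ⟨ω⟩).elim
  obtain ⟨ηd⟩ := hne
  set b₀ : ∀ j : {j // ¬ j ∈ Ar}, Noise j := fun j => ηd j with hb₀
  set QA : (∀ j : {j // j ∈ Ar}, Noise j) → Prop := fun a => e.symm (a, b₀) ∈ B with hQA
  have hQmem : ∀ a b, (e.symm (a, b) ∈ B ↔ QA a) := by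
    intro a b
    apply hQiff
    intro j hj
    rw [hmerge, hmerge, dif_pos hj, dif_pos hj]
  set S : ℝ := ∑ a, if QA a then ∏ j : {j // j ∈ Ar}, p j (a j) else 0 with hS
  have hone : (∑ b : ∀ j : {j // ¬ j ∈ Ar}, Noise j,
      ∏ j : {j // ¬ j ∈ Ar}, p j (b j)) = 1 :=
    sum_pi_one _ _ fun j => hsump j.1
  have hprB : pr P B = S := by
    unfold pr
    rw [hsplit, hS]
    apply Finset.sum_congr rfl
    intro a _
    by_cases hq : QA a
    · rw [if_pos hq, ← mul_one (∏ j : {j // j ∈ Ar}, p j (a j)), ← hone, Finset.mul_sum]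
      exact Finset.sum_congr rfl fun b _ => by rw [if_pos ((hQmem a b).mpr hq), hPfac]
    · rw [if_neg hq]
      exact Finset.sum_eq_zero fun b _ => if_neg fun hb => hq ((hQmem a b).mp hb)
  have hSne : S ≠ 0 := hprB ▸ hposZ
  have hnumA : ∀ η₀ : ∀ j, Noise j,
      pr P ({η | ∀ j ∈ Ar, η j = η₀ j} ∩ B) =
      (if η₀ ∈ B then ∏ j : {j // j ∈ Ar}, p j (η₀ j) else 0) := by
    intro η₀
    set a₀ : ∀ j : {j // j ∈ Ar}, Noise j := fun j => η₀ j with ha₀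
    have hcond : ∀ a b, (∀ j ∈ Ar, e.symm (a, b) j = η₀ j) ↔ a = a₀ := by
      intro a b
      constructor
      · intro h
        funext j
        have := h j j.2
        rwa [hmerge, dif_pos j.2] at this
      · rintro rfl j hj
        rw [hmerge, dif_pos hj]
    have hQ0 : ∀ b, (e.symm (a₀, b) ∈ B ↔ η₀ ∈ B) := by
      intro b
      apply hQiff
      intro j hj
      rw [hmerge, dif_pos hj]
    unfold pr
    rw [hsplit]
    rw [Finset.sum_eq_single a₀]
    · by_cases hq : η₀ ∈ B
      · rw [if_pos hq, ← mul_one (∏ j : {j // j ∈ Ar}, p j (η₀ j)), ← hone,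
          Finset.mul_sum]
        refine Finset.sum_congr rfl fun b _ => ?_
        rw [if_pos ⟨(hcond a₀ b).mpr rfl, (hQ0 b).mpr hq⟩, hPfac]
      · rw [if_neg hq]
        exact Finset.sum_eq_zero fun b _ => if_neg fun hb => hq ((hQ0 b).mp hb.2)
    · intro a _ ha
      exact Finset.sum_eq_zero fun b _ => if_neg fun hb => ha ((hcond a b).mp hb.1)
    · intro h
      exact absurd (Finset.mem_univ _) h
  have hnum1 : ∀ η₀ : ∀ j, Noise j,
      pr P ({η | η = η₀} ∩ B) = if η₀ ∈ B then P η₀ else 0 := by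
    intro η₀
    unfold pr
    rw [Finset.sum_eq_single η₀]
    · by_cases hq : η₀ ∈ B
      · rw [if_pos ⟨rfl, hq⟩, if_pos hq]
      · rw [if_neg fun hb => hq hb.2, if_neg hq]
    · intro η _ hη
      exact if_neg fun hb => hη hb.1
    · intro h
      exact absurd (Finset.mem_univ _) h
  have hnumk : ∀ (k : ι) (hk : k ∉ Ar) (nk : Noise k),
      pr P ({η | η k = nk} ∩ B) = S * p k nk := by
    intro k hk nk
    have hptk : (∑ b : ∀ j : {j // ¬ j ∈ Ar}, Noise j,
        if b ⟨k, hk⟩ = nk then ∏ j : {j // ¬ j ∈ Ar}, p j (b j) else 0) = p k nk :=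
      sum_pi_point (fun j : {j // ¬ j ∈ Ar} => Noise j)
        (fun j => p j.1) (fun j => hsump j.1) ⟨k, hk⟩ nk
    unfold pr
    rw [hsplit]
    trans (∑ a, (if QA a then ∏ j : {j // j ∈ Ar}, p j (a j) else 0) * p k nk)
    · refine Finset.sum_congr rfl fun a _ => ?_
      by_cases hq : QA a
      · rw [if_pos hq, ← hptk, Finset.mul_sum]
        refine Finset.sum_congr rfl fun b _ => ?_
        have hbk : e.symm (a, b) k = b ⟨k, hk⟩ := by rw [hmerge, dif_neg hk]
        by_cases hbn : b ⟨k, hk⟩ = nk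
        · rw [if_pos ⟨show e.symm (a, b) k = nk from hbk.trans hbn,
            (hQmem a b).mpr hq⟩, hPfac, if_pos hbn]
        · rw [if_neg ?_, if_neg hbn, mul_zero]
          rintro ⟨h1, -⟩
          exact hbn (hbk.symm.trans h1)
      · rw [if_neg hq, zero_mul]
        exact Finset.sum_eq_zero fun b _ => if_neg fun hb => hq ((hQmem a b).mp hb.2)
    · rw [← Finset.sum_mul, ← hS]
  constructor
  · intro η₀
    unfold cpr
    rw [hnum1 η₀, hnumA η₀, hprB]
    have hprodsplit : P η₀ = (∏ j : {j // j ∈ Ar}, p j (η₀ j)) *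
        (∏ j : {j // ¬ j ∈ Ar}, p j (η₀ j)) := by
      rw [hP, ← Fintype.prod_subtype_mul_prod_subtype (· ∈ Ar) (fun j => p j (η₀ j))]
    have hif : (∏ j, if j ∈ Ar then (1 : ℝ) else p j (η₀ j)) =
        ∏ j : {j // ¬ j ∈ Ar}, p j (η₀ j) := by
      rw [← Fintype.prod_subtype_mul_prod_subtype (· ∈ Ar)
        (fun j => if j ∈ Ar then (1 : ℝ) else p j (η₀ j))]
      have h1 : (∏ j : {j // j ∈ Ar}, if (j : ι) ∈ Ar then (1 : ℝ) else p j (η₀ j)) = 1 :=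
        Finset.prod_eq_one fun j _ => if_pos j.2
      have h2 : (∏ j : {j // ¬ j ∈ Ar}, if (j : ι) ∈ Ar then (1 : ℝ) else p j (η₀ j)) =
          ∏ j : {j // ¬ j ∈ Ar}, p j (η₀ j) :=
        Finset.prod_congr rfl fun j _ => if_neg j.2
      rw [h1, h2, one_mul]
    rw [hif]
    by_cases hq : η₀ ∈ B
    · rw [if_pos hq, if_pos hq, hprodsplit]
      ring
    · rw [if_neg hq, if_neg hq, zero_div, zero_mul]
  · intro k hk nk
    unfold cpr
    rw [hnumk k hk nk, hprB, mul_comm, mul_div_assoc, div_self hSne, mul_one]
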